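/- Let P, Q be PMFs on a finite set X with ∑_x |P(x) − Q(x)| ≤ δ for some δ ∈ [0,1] and |X| ≥ 2. Then |H(P) − H(Q)| ≤ (δ/2)·log(|X|−1) + h(δ/2), where h(p) = −p log p − (1−p) log(1−p) is the binary entropy function. -/

import Mathlib

open Finset

private lemma negMulLog_add_le' {u v : ℝ} (hu : 0 ≤ u) (hv : 0 ≤ v) :
    Real.negMulLog (u + v) ≤ Real.negMulLog u + Real.negMulLog v := by
  have h1 : -(u * Real.log (u + v)) ≤ -(u * Real.log u) := by
    rcases hu.eq_or_lt with h | h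
    · simp [← h]
    · have := Real.log_le_log h (le_add_of_nonneg_right hv)
      nlinarith
  have h2 : -(v * Real.log (u + v)) ≤ -(v * Real.log v) := by
    rcases hv.eq_or_lt with h | h
    · simp [← h]
    · have := Real.log_le_log h (le_add_of_nonneg_left hu)
      nlinarith
  simp only [Real.negMulLog_eq_neg]
  have e : -((u + v) * Real.log (u + v)) =
      -(u * Real.log (u + v)) + -(v * Real.log (u + v)) := by ring
  linarith

private lemma sum_negMulLog_le_log_card' {X : Type*} (S : Finset X) (hS : S.Nonempty)
    (a : X → ℝ) (ha0 : ∀ x ∈ S, 0 ≤ a x) (ha1 : ∑ x ∈ S, a x = 1) :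
    ∑ x ∈ S, Real.negMulLog (a x) ≤ Real.log (S.card : ℝ) := by
  have hc : (0 : ℝ) < S.card := by exact_mod_cast hS.card_pos
  have jensen := Real.concaveOn_negMulLog.le_map_sum
    (t := S) (w := fun _ => (S.card : ℝ)⁻¹) (p := a)
    (fun i _ => by positivity)
    (by simp [Finset.sum_const, hc.ne'])
    (fun i hi => Set.mem_Ici.mpr (ha0 i hi))
  simp only [smul_eq_mul, ← Finset.mul_sum, ha1, mul_one] at jensen
  have hval : Real.negMulLog ((S.card : ℝ)⁻¹) = (S.card : ℝ)⁻¹ * Real.log (S.card : ℝ) := by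
    simp [Real.negMulLog_eq_neg, Real.log_inv]
  rw [hval] at jensen
  have := (mul_le_mul_iff_right₀ (inv_pos.mpr hc)).mp jensen
  exact this

private lemma oneside {X : Type*} [Fintype X] (hX : 2 ≤ Fintype.card X)
    (P Q : X → ℝ)
    (hP0 : ∀ x, 0 ≤ P x) (hP1 : ∑ x, P x = 1)
    (hQ0 : ∀ x, 0 ≤ Q x) (hQ1 : ∑ x, Q x = 1)
    (δ : ℝ) (hδ0 : 0 ≤ δ) (hδ1 : δ ≤ 1)
    (hTV : ∑ x, |P x - Q x| ≤ δ) :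
    (∑ x, Real.negMulLog (P x)) - (∑ x, Real.negMulLog (Q x)) ≤
      δ / 2 * Real.log ((Fintype.card X : ℝ) - 1) + Real.binEntropy (δ / 2) := by
  set n := Fintype.card X with hn
  have hn2 : (2 : ℝ) ≤ (n : ℝ) := by exact_mod_cast hX
  have hL : 0 ≤ Real.log ((n : ℝ) - 1) := Real.log_nonneg (by linarith)
  set s := ∑ x, max (P x - Q x) 0 with hs_def
  have hs0 : 0 ≤ s := Finset.sum_nonneg fun x _ => le_max_right _ _
  have hsym : s = ∑ x, max (Q x - P x) 0 := by
    have key : ∑ x, (max (P x - Q x) 0 - max (Q x - P x) 0) = 0 := by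
      have : ∀ x, max (P x - Q x) 0 - max (Q x - P x) 0 = P x - Q x := by
        intro x
        rcases le_total (P x) (Q x) with h | h
        · rw [max_eq_right (by linarith), max_eq_left (by linarith)]; ring
        · rw [max_eq_left (by linarith), max_eq_right (by linarith)]; ring
      rw [Finset.sum_congr rfl fun x _ => this x, Finset.sum_sub_distrib, hP1, hQ1]
      ring
    rw [Finset.sum_sub_distrib] at key
    rw [hs_def]; linarith
  have h2s : 2 * s = ∑ x, |P x - Q x| := by
    have : ∀ x, |P x - Q x| = max (P x - Q x) 0 + max (Q x - P x) 0 := by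
      intro x
      rcases le_total (P x) (Q x) with h | h
      · rw [abs_of_nonpos (by linarith), max_eq_right (by linarith),
          max_eq_left (by linarith)]; ring
      · rw [abs_of_nonneg (by linarith), max_eq_left (by linarith),
          max_eq_right (by linarith)]; ring
    rw [Finset.sum_congr rfl fun x _ => this x, Finset.sum_add_distrib, ← hs_def, ← hsym]
    ring
  have hsδ : s ≤ δ / 2 := by linarith
  have hs_half : s ≤ 1 / 2 := by linarith
  rcases hs0.eq_or_lt with hs0' | hspos
  · -- s = 0 : P = Q
    have hmax1 : ∀ x ∈ Finset.univ, max (P x - Q x) 0 = 0 :=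
      (Finset.sum_eq_zero_iff_of_nonneg fun x _ => le_max_right _ _).mp hs0'.symm
    have hmax2 : ∀ x ∈ Finset.univ, max (Q x - P x) 0 = 0 :=
      (Finset.sum_eq_zero_iff_of_nonneg fun x _ => le_max_right _ _).mp
        (by rw [← hsym]; exact hs0'.symm)
    have hPQ : ∀ x, P x = Q x := by
      intro x
      have h1 := hmax1 x (Finset.mem_univ x)
      have h2 := hmax2 x (Finset.mem_univ x)
      have := le_max_left (P x - Q x) 0
      have := le_max_left (Q x - P x) 0
      linarith
    have heq : ∑ x, Real.negMulLog (P x) = ∑ x, Real.negMulLog (Q x) :=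
      Finset.sum_congr rfl fun x _ => by rw [hPQ x]
    have hbe : 0 ≤ Real.binEntropy (δ / 2) :=
      Real.binEntropy_nonneg (by linarith) (by linarith)
    have : 0 ≤ δ / 2 * Real.log ((n : ℝ) - 1) := by positivity
    linarith
  · -- main case s > 0
    set m := fun x => min (P x) (Q x) with hm_def
    have hm0 : ∀ x, 0 ≤ m x := fun x => le_min (hP0 x) (hQ0 x)
    have hPm : ∀ x, P x - m x = max (P x - Q x) 0 := by
      intro x
      rcases le_total (P x) (Q x) with h | h
      · rw [show m x = P x from min_eq_left h, max_eq_right (by linarith)]; ring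
      · rw [show m x = Q x from min_eq_right h, max_eq_left (by linarith)]
    have hQm : ∀ x, Q x - m x = max (Q x - P x) 0 := by
      intro x
      rcases le_total (P x) (Q x) with h | h
      · rw [show m x = P x from min_eq_left h, max_eq_left (by linarith)]
      · rw [show m x = Q x from min_eq_right h, max_eq_right (by linarith)]; ring
    have hsumPm : ∑ x, (P x - m x) = s := Finset.sum_congr rfl fun x _ => hPm x
    have hsumQm : ∑ x, (Q x - m x) = s := by
      rw [Finset.sum_congr rfl fun x _ => hQm x, ← hsym]
    have hsm : ∑ x, m x = 1 - s := by
      have := hsumPm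
      rw [Finset.sum_sub_distrib, hP1] at this
      linarith
    have h1s : (0 : ℝ) < 1 - s := by linarith
    -- Step A
    have stepA : ∑ x, Real.negMulLog (P x) ≤
        ∑ x, Real.negMulLog (m x) + ∑ x, Real.negMulLog (P x - m x) := by
      rw [← Finset.sum_add_distrib]
      apply Finset.sum_le_sum
      intro x _
      have h := negMulLog_add_le' (hm0 x) (sub_nonneg.mpr (min_le_left (P x) (Q x)))
      have e : m x + (P x - m x) = P x := by ring
      rwa [e] at h
    -- Step B
    have stepB : ∀ x, Real.negMulLog (m x) + m x * Real.log (1 - s) ≤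
        Real.negMulLog (Q x) := by
      intro x
      have hb0 : 0 ≤ (Q x - m x) / s :=
        div_nonneg (sub_nonneg.mpr (min_le_right (P x) (Q x))) hspos.le
      have hQmx : Q x - m x ≤ s := by
        rw [← hsumQm]
        exact Finset.single_le_sum
          (f := fun x => Q x - m x)
          (fun y _ => sub_nonneg.mpr (min_le_right (P y) (Q y))) (Finset.mem_univ x)
      have hb1 : (Q x - m x) / s ≤ 1 := (div_le_one hspos).mpr hQmx
      have hcon := Real.concaveOn_negMulLog.2
        (Set.mem_Ici.mpr (div_nonneg (hm0 x) h1s.le))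
        (Set.mem_Ici.mpr hb0) (by linarith : (0:ℝ) ≤ 1 - s) hspos.le (by ring)
      have harg : (1 - s) • (m x / (1 - s)) + s • ((Q x - m x) / s) = Q x := by
        simp only [smul_eq_mul]
        field_simp
        ring
      rw [harg] at hcon
      simp only [smul_eq_mul] at hcon
      have hfb : 0 ≤ Real.negMulLog ((Q x - m x) / s) := Real.negMulLog_nonneg hb0 hb1
      have hscale : (1 - s) * Real.negMulLog (m x / (1 - s)) =
          Real.negMulLog (m x) + m x * Real.log (1 - s) := by
        have e : (1 - s) * (m x / (1 - s)) = m x := by field_simp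
        have h2 := Real.negMulLog_mul (1 - s) (m x / (1 - s))
        rw [e] at h2
        have h3 : m x / (1 - s) * Real.negMulLog (1 - s) = -(m x * Real.log (1 - s)) := by
          simp only [Real.negMulLog_eq_neg]
          field_simp
        rw [h3] at h2
        linarith
      nlinarith [mul_nonneg hspos.le hfb]
    have stepBsum : ∑ x, Real.negMulLog (m x) + (1 - s) * Real.log (1 - s) ≤
        ∑ x, Real.negMulLog (Q x) := by
      have h := Finset.sum_le_sum (fun x (_ : x ∈ Finset.univ) => stepB x)
      rw [Finset.sum_add_distrib, ← Finset.sum_mul, hsm] at h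
      exact h
    -- entropy of the "excess" part
    set S := Finset.univ.filter (fun x => Q x < P x) with hS_def
    have hzero : ∀ x ∈ Finset.univ, x ∉ S → P x - m x = 0 := by
      intro x _ hx
      rw [hS_def, Finset.mem_filter] at hx
      push_neg at hx
      have hle : P x ≤ Q x := hx (Finset.mem_univ x)
      rw [show m x = P x from min_eq_left hle]; ring
    have hSsum : ∑ x ∈ S, (P x - m x) = s := by
      rw [Finset.sum_subset (Finset.subset_univ S) hzero, hsumPm]
    have hSne : S.Nonempty := by
      rw [Finset.nonempty_iff_ne_empty]
      intro h
      rw [h, Finset.sum_empty] at hSsum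
      exact absurd hSsum.symm (ne_of_gt hspos)
    have hScard : (S.card : ℝ) ≤ (n : ℝ) - 1 := by
      have hne : S ≠ Finset.univ := by
        intro h
        have hall : ∀ x, Q x < P x := by
          intro x
          have : x ∈ S := h ▸ Finset.mem_univ x
          rw [hS_def, Finset.mem_filter] at this
          exact this.2
        have : (∑ x, Q x) < ∑ x, P x :=
          Finset.sum_lt_sum_of_nonempty
            (Finset.univ_nonempty_iff.mpr (Fintype.card_pos_iff.mp (by omega))) fun x _ => hall x
        rw [hP1, hQ1] at this
        exact lt_irrefl _ this
      have hlt : S.card < n := by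
        rw [hn, ← Finset.card_univ]
        exact Finset.card_lt_card (Finset.ssubset_univ_iff.mpr hne)
      have : (S.card : ℝ) + 1 ≤ (n : ℝ) := by exact_mod_cast hlt
      linarith
    have hA : ∑ x, Real.negMulLog (P x - m x) ≤
        s * Real.log ((n : ℝ) - 1) - s * Real.log s := by
      have hrestrict : ∑ x, Real.negMulLog (P x - m x) =
          ∑ x ∈ S, Real.negMulLog (P x - m x) :=
        (Finset.sum_subset (Finset.subset_univ S)
          (fun x hx hxs => by rw [hzero x hx hxs, Real.negMulLog_zero])).symm
      set a := fun x => (P x - m x) / s with ha_def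
      have ha0 : ∀ x ∈ S, 0 ≤ a x := fun x _ =>
        div_nonneg (sub_nonneg.mpr (min_le_left (P x) (Q x))) hspos.le
      have ha1 : ∑ x ∈ S, a x = 1 := by
        rw [ha_def, ← Finset.sum_div, hSsum, div_self hspos.ne']
      have hterm : ∀ x, Real.negMulLog (P x - m x) =
          a x * Real.negMulLog s + s * Real.negMulLog (a x) := by
        intro x
        have e : s * a x = P x - m x := by
          rw [ha_def]; field_simp
        rw [← e, Real.negMulLog_mul]
      have hsum2 : ∑ x ∈ S, Real.negMulLog (P x - m x) =
          Real.negMulLog s + s * ∑ x ∈ S, Real.negMulLog (a x) := by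
        rw [Finset.sum_congr rfl fun x _ => hterm x, Finset.sum_add_distrib,
          ← Finset.sum_mul, ha1, one_mul, ← Finset.mul_sum]
      have hjensen := sum_negMulLog_le_log_card' S hSne a ha0 ha1
      have hlogcard : Real.log (S.card : ℝ) ≤ Real.log ((n : ℝ) - 1) :=
        Real.log_le_log (by exact_mod_cast hSne.card_pos) hScard
      have : ∑ x ∈ S, Real.negMulLog (a x) ≤ Real.log ((n : ℝ) - 1) :=
        hjensen.trans hlogcard
      have hmul := mul_le_mul_of_nonneg_left this hspos.le
      rw [hrestrict, hsum2]
      have : Real.negMulLog s = -(s * Real.log s) := by simp [Real.negMulLog_eq_neg]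
      linarith
    have hbeS : Real.binEntropy s = -(s * Real.log s) - (1 - s) * Real.log (1 - s) := by
      rw [Real.binEntropy, Real.log_inv, Real.log_inv]; ring
    have main : (∑ x, Real.negMulLog (P x)) - (∑ x, Real.negMulLog (Q x)) ≤
        s * Real.log ((n : ℝ) - 1) + Real.binEntropy s := by
      rw [hbeS]; linarith
    have hmono1 : s * Real.log ((n : ℝ) - 1) ≤ δ / 2 * Real.log ((n : ℝ) - 1) :=
      mul_le_mul_of_nonneg_right hsδ hL
    have hmono2 : Real.binEntropy s ≤ Real.binEntropy (δ / 2) :=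
      Real.binEntropy_strictMonoOn.monotoneOn
        (Set.mem_Icc.mpr ⟨hs0, by norm_num; linarith⟩)
        (Set.mem_Icc.mpr ⟨by linarith, by norm_num; linarith⟩) hsδ
    linarith

/-- Continuity of entropy in total variation (Csiszár–Körner, Problem 3.10):
if `∑ x, |P x − Q x| ≤ δ` with `δ ∈ [0,1]` and `|X| ≥ 2`, then
`|H(P) − H(Q)| ≤ (δ/2) log₂(|X|−1) + h(δ/2)`. -/
theorem entropy_continuity {X : Type*} [Fintype X] (hX : 2 ≤ Fintype.card X)
    (P Q : X → ℝ)
    (hP0 : ∀ x, 0 ≤ P x) (hP1 : ∑ x, P x = 1)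
    (hQ0 : ∀ x, 0 ≤ Q x) (hQ1 : ∑ x, Q x = 1)
    (δ : ℝ) (hδ0 : 0 ≤ δ) (hδ1 : δ ≤ 1)
    (hTV : ∑ x, |P x - Q x| ≤ δ) :
    |(-∑ x, P x * Real.logb 2 (P x)) - (-∑ x, Q x * Real.logb 2 (Q x))| ≤
      δ / 2 * Real.logb 2 ((Fintype.card X : ℝ) - 1) +
        (-(δ / 2) * Real.logb 2 (δ / 2) - (1 - δ / 2) * Real.logb 2 (1 - δ / 2)) := by
  have hlog2 : (0 : ℝ) < Real.log 2 := Real.log_pos one_lt_two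
  have conv : ∀ R : X → ℝ, -∑ x, R x * Real.logb 2 (R x) =
      (∑ x, Real.negMulLog (R x)) / Real.log 2 := by
    intro R
    rw [Finset.sum_div, ← Finset.sum_neg_distrib]
    apply Finset.sum_congr rfl
    intro x _
    simp only [Real.logb, Real.negMulLog_eq_neg, div_eq_mul_inv]
    ring
  have convR : δ / 2 * Real.logb 2 ((Fintype.card X : ℝ) - 1) +
      (-(δ / 2) * Real.logb 2 (δ / 2) - (1 - δ / 2) * Real.logb 2 (1 - δ / 2)) =
      (δ / 2 * Real.log ((Fintype.card X : ℝ) - 1) + Real.binEntropy (δ / 2)) /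
        Real.log 2 := by
    rw [Real.binEntropy, Real.log_inv, Real.log_inv]
    simp only [Real.logb, div_eq_mul_inv]
    ring
  have hTV' : ∑ x, |Q x - P x| ≤ δ := by
    have : ∀ x, |Q x - P x| = |P x - Q x| := fun x => abs_sub_comm _ _
    rw [Finset.sum_congr rfl fun x _ => this x]
    exact hTV
  have h1 := oneside hX P Q hP0 hP1 hQ0 hQ1 δ hδ0 hδ1 hTV
  have h2 := oneside hX Q P hQ0 hQ1 hP0 hP1 δ hδ0 hδ1 hTV'
  have habs : |(∑ x, Real.negMulLog (P x)) - (∑ x, Real.negMulLog (Q x))| ≤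
      δ / 2 * Real.log ((Fintype.card X : ℝ) - 1) + Real.binEntropy (δ / 2) :=
    abs_sub_le_iff.mpr ⟨h1, h2⟩
  rw [conv P, conv Q, convR, div_sub_div_same, abs_div, abs_of_pos hlog2]
  gcongr
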